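/- arXiv:2402.13179 — 5 statements merged into one kernel-verified Lean document; each statement's English description precedes it below -/
import Mathlib

section
/- Let M be a left H-Hopf module over a Hopf algebra H in a braided monoidal category, with action α: H ⊗ M → M and coaction φ: M → H ⊗ M. Then the endomorphism ν := α ∘ (σ ⊗ 1_M) ∘ φ : M → M is idempotent, i.e., ν ∘ ν = ν. -/
open CategoryTheory MonoidalCategory BraidedCategory

universe v u

/-- A Hopf algebra object in a braided monoidal category, given by explicit
structure maps and axioms. -/
structure HopfAlg (C : Type u) [Category.{v} C] [MonoidalCategory C]
    [BraidedCategory C] where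
  H : C
  η : 𝟙_ C ⟶ H
  μ : H ⊗ H ⟶ H
  ε : H ⟶ 𝟙_ C
  δ : H ⟶ H ⊗ H
  σ : H ⟶ H
  mul_assoc : (μ ▷ H) ≫ μ = (α_ H H H).hom ≫ (H ◁ μ) ≫ μ
  one_mul : (η ▷ H) ≫ μ = (λ_ H).hom
  mul_one : (H ◁ η) ≫ μ = (ρ_ H).hom
  coassoc : δ ≫ (δ ▷ H) = δ ≫ (H ◁ δ) ≫ (α_ H H H).inv
  counit_left : δ ≫ (ε ▷ H) = (λ_ H).inv
  counit_right : δ ≫ (H ◁ ε) = (ρ_ H).inv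
  mul_counit : μ ≫ ε = (ε ⊗ₘ ε) ≫ (λ_ (𝟙_ C)).hom
  one_counit : η ≫ ε = 𝟙 (𝟙_ C)
  mul_comul : μ ≫ δ = (δ ⊗ₘ δ) ≫ tensorμ H H H H ≫ (μ ⊗ₘ μ)
  one_comul : η ≫ δ = (λ_ (𝟙_ C)).inv ≫ (η ⊗ₘ η)
  antipode_left : δ ≫ (σ ▷ H) ≫ μ = ε ≫ η
  antipode_right : δ ≫ (H ◁ σ) ≫ μ = ε ≫ η

/-- A left Hopf module over a Hopf algebra object `A` in a braided monoidal
category: a left `A`-module and left `A`-comodule satisfying the Hopf module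
compatibility law. -/
structure HopfModule {C : Type u} [Category.{v} C] [MonoidalCategory C]
    [BraidedCategory C] (A : HopfAlg C) where
  M : C
  act : A.H ⊗ M ⟶ M
  coact : M ⟶ A.H ⊗ M
  act_mul : (A.μ ▷ M) ≫ act = (α_ A.H A.H M).hom ≫ (A.H ◁ act) ≫ act
  act_one : (A.η ▷ M) ≫ act = (λ_ M).hom
  coact_comul : coact ≫ (A.δ ▷ M) = coact ≫ (A.H ◁ coact) ≫ (α_ A.H A.H M).inv
  coact_counit : coact ≫ (A.ε ▷ M) = (λ_ M).inv
  compat : act ≫ coact = (A.δ ⊗ₘ coact) ≫ tensorμ A.H A.H A.H M ≫ (A.μ ⊗ₘ act)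

section Aux

variable {C : Type u} [Category.{v} C] [MonoidalCategory C] [BraidedCategory C]

/-- Package a `HopfAlg` as a mathlib `Hopf_` object, to import the standard
antipode lemmas. -/
noncomputable def HopfAlg.toHopf_ (A : HopfAlg C) : HopfObj A.H where
  one := A.η
  mul := A.μ
  one_mul := A.one_mul
  mul_one := A.mul_one
  mul_assoc := A.mul_assoc
  counit := A.ε
  comul := A.δ
  counit_comul := A.counit_left
  comul_counit := A.counit_right
  comul_assoc := by
    rw [← cancel_mono (α_ A.H A.H A.H).inv]
    simpa using A.coassoc.symm
  mul_comul := A.mul_comul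
  one_comul := by rw [A.one_comul]; rfl
  mul_counit := A.mul_counit
  one_counit := A.one_counit
  antipode := A.σ
  antipode_left := A.antipode_left
  antipode_right := A.antipode_right

/-- The antipode is an anti-homomorphism of the multiplication. -/
theorem HopfAlg.mul_antipode (A : HopfAlg C) :
    A.μ ≫ A.σ = (A.σ ⊗ₘ A.σ) ≫ (β_ A.H A.H).hom ≫ A.μ :=
  @HopfObj.mul_antipode C _ _ _ A.H A.toHopf_

/-- The antipode preserves the counit. -/
theorem HopfAlg.antipode_counit (A : HopfAlg C) : A.σ ≫ A.ε = A.ε :=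
  @HopfObj.antipode_counit C _ _ _ A.H A.toHopf_

/-- Braid-level identity: sliding the two antipodes and combining the two
crossings into a single crossing of the tensor square. -/
lemma HopfAlg.claimH2 (H : C) (d : H ⟶ H ⊗ H) (s : H ⟶ H) (m : H ⊗ H ⟶ H)
    (hm : (m ▷ H) ≫ m = (α_ H H H).hom ≫ (H ◁ m) ≫ m) :
    (d ▷ H) ≫ (α_ H H H).hom ≫ (H ◁ (β_ H H).hom) ≫ (α_ H H H).inv
      ≫ ((s ⊗ₘ s) ▷ H) ≫ ((β_ H H).hom ▷ H) ≫ (m ▷ H) ≫ m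
    = (β_ H H).hom ≫ (s ⊗ₘ (d ≫ (s ▷ H) ≫ m)) ≫ m := by
  slice_lhs 7 8 => rw [hm]
  slice_lhs 5 6 => rw [← comp_whiskerRight, braiding_naturality s s, comp_whiskerRight]
  slice_lhs 6 7 => rw [← tensorHom_id, associator_naturality]
  slice_lhs 7 8 => rw [← id_tensorHom, tensorHom_comp_tensorHom, Category.comp_id, tensorHom_id]
  slice_lhs 2 6 => rw [← braiding_tensor_left_hom]
  slice_lhs 1 2 => rw [braiding_naturality_left]
  slice_lhs 2 3 => rw [← id_tensorHom, tensorHom_comp_tensorHom, Category.id_comp]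

/-- Module-level bookkeeping: rewriting the composite of compatibility and the
antipode rewrite into a whiskered pure-`H` composite. -/
lemma HopfAlg.partA (H M : C) (d : H ⟶ H ⊗ H) (c : M ⟶ H ⊗ M) (x : H ⊗ H ⟶ H ⊗ H)
    (m : H ⊗ H ⟶ H) (a : H ⊗ M ⟶ M)
    (ha : (m ▷ M) ≫ a = (α_ H H M).hom ≫ (H ◁ a) ≫ a) :
    (d ⊗ₘ c) ≫ tensorμ H H H M ≫ ((x ≫ m) ⊗ₘ a) ≫ a
    = (H ◁ c) ≫ (α_ H H M).inv ≫
        (((d ▷ H) ≫ (α_ H H H).hom ≫ (H ◁ (β_ H H).hom) ≫ (α_ H H H).inv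
          ≫ (x ▷ H) ≫ (m ▷ H) ≫ m) ▷ M) ≫ a := by
  have ha' : (H ◁ a) ≫ a = (α_ H H M).inv ≫ (m ▷ M) ≫ a := by
    rw [ha, Iso.inv_hom_id_assoc]
  rw [tensorHom_def' d c, tensorHom_def ((x ≫ m)) a]
  slice_lhs 5 6 => rw [ha']
  simp only [tensorμ, MonoidalCategory.tensorHom_def, Category.assoc]
  monoidal

/-- Final bookkeeping: once the antipode axiom has produced `ε ≫ η`, the
composite collapses. -/
lemma HopfAlg.partB (H M : C) (c : M ⟶ H ⊗ M) (s : H ⟶ H) (e : H ⟶ 𝟙_ C) (u : 𝟙_ C ⟶ H)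
    (m : H ⊗ H ⟶ H) (a : H ⊗ M ⟶ M) (hmu : (H ◁ u) ≫ m = (ρ_ H).hom) :
    (H ◁ c) ≫ (α_ H H M).inv ≫ (((β_ H H).hom ≫ (s ⊗ₘ (e ≫ u)) ≫ m) ▷ M) ≫ a
    = (e ▷ M) ≫ (λ_ M).hom ≫ c ≫ (s ▷ M) ≫ a := by
  have core : (β_ H H).hom ≫ (s ⊗ₘ (e ≫ u)) ≫ m
      = (H ◁ s) ≫ (e ▷ H) ≫ (λ_ H).hom := by
    rw [MonoidalCategory.tensorHom_def]
    slice_lhs 3 4 => rw [MonoidalCategory.whiskerLeft_comp]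
    slice_lhs 4 5 => rw [hmu]
    rw [← braiding_naturality_right_assoc, ← braiding_naturality_left_assoc,
      braiding_rightUnitor]
  rw [core]
  simp only [comp_whiskerRight, Category.assoc]
  rw [← associator_inv_naturality_middle_assoc, ← associator_inv_naturality_left_assoc,
    ← MonoidalCategory.whiskerLeft_comp_assoc, whisker_exchange_assoc]
  simp

/-- The key lemma: `act ≫ ν = (ε ▷ M) ≫ (λ_ M).hom ≫ ν`. -/
lemma HopfAlg.act_nu (A : HopfAlg C) (N : HopfModule A) :
    N.act ≫ N.coact ≫ (A.σ ▷ N.M) ≫ N.act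
    = (A.ε ▷ N.M) ≫ (λ_ N.M).hom ≫ N.coact ≫ (A.σ ▷ N.M) ≫ N.act := by
  slice_lhs 1 2 => rw [N.compat]
  slice_lhs 3 4 => rw [← tensorHom_id, tensorHom_comp_tensorHom, Category.comp_id, A.mul_antipode]
  rw [show (A.σ ⊗ₘ A.σ) ≫ (β_ A.H A.H).hom ≫ A.μ
      = ((A.σ ⊗ₘ A.σ) ≫ (β_ A.H A.H).hom) ≫ A.μ from (Category.assoc _ _ _).symm]
  rw [HopfAlg.partA A.H N.M A.δ N.coact ((A.σ ⊗ₘ A.σ) ≫ (β_ A.H A.H).hom)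
    A.μ N.act N.act_mul]
  rw [show ((A.σ ⊗ₘ A.σ) ≫ (β_ A.H A.H).hom) ▷ A.H
      = ((A.σ ⊗ₘ A.σ) ▷ A.H) ≫ ((β_ A.H A.H).hom ▷ A.H) from comp_whiskerRight _ _ _,
    Category.assoc]
  rw [HopfAlg.claimH2 A.H A.δ A.σ A.μ A.mul_assoc, A.antipode_left]
  exact HopfAlg.partB A.H N.M N.coact A.σ A.ε A.η A.μ N.act A.mul_one

end Aux

/-- The endomorphism ν = α ∘ (σ ⊗ 1) ∘ φ of a Hopf module is idempotent. -/
theorem nu_idempotent {C : Type u} [Category.{v} C] [MonoidalCategory C]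
    [BraidedCategory C] (A : HopfAlg C) (N : HopfModule A) :
    (N.coact ≫ (A.σ ▷ N.M) ≫ N.act) ≫ (N.coact ≫ (A.σ ▷ N.M) ≫ N.act) =
      N.coact ≫ (A.σ ▷ N.M) ≫ N.act := by
  simp only [Category.assoc]
  slice_lhs 3 6 => rw [HopfAlg.act_nu A N]
  rw [← comp_whiskerRight_assoc, A.antipode_counit]
  slice_lhs 1 2 => rw [N.coact_counit]
  simp
end

section
/- Let M be a left H-Hopf module with action α, coaction φ, and ν := α ∘ (σ ⊗ 1_M) ∘ φ. Then φ ∘ ν = (η ⊗ 1_M) ∘ ν, i.e., the coaction of the image of ν is trivial. -/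
open CategoryTheory MonoidalCategory BraidedCategory

universe v u

namespace HopfAlg

variable {C : Type u} [Category.{v} C] [MonoidalCategory C] [BraidedCategory C]

/-- The Hopf monoid object of a `HopfAlg`. -/
noncomputable def toHopf (A : HopfAlg C) : HopfObj A.H where
  one := A.η
  mul := A.μ
  one_mul := A.one_mul
  mul_one := A.mul_one
  mul_assoc := A.mul_assoc
  counit := A.ε
  comul := A.δ
  counit_comul := A.counit_left
  comul_counit := A.counit_right
  comul_assoc := by simp [reassoc_of% A.coassoc]
  mul_comul := A.mul_comul
  one_comul := by rw [A.one_comul]; rfl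
  mul_counit := by simpa using A.mul_counit
  one_counit := A.one_counit
  antipode := A.σ
  antipode_left := A.antipode_left
  antipode_right := A.antipode_right

/-- The antipode is a (braided) anti-comonoid morphism. -/
theorem sigma_comul (A : HopfAlg C) :
    A.σ ≫ A.δ = A.δ ≫ (β_ A.H A.H).hom ≫ (A.σ ⊗ₘ A.σ) :=
  @HopfObj.antipode_comul C _ _ _ A.H A.toHopf

/-- A structural identity: `tensorμ` against a trailing inert strand. -/
theorem aux_struct {H M : C} (u : H ⟶ H ⊗ H) (v : H ⊗ H ⟶ H) :
    (α_ H H M).hom ≫ u ▷ (H ⊗ M) ≫ tensorμ H H H M ≫ v ▷ (H ⊗ M) =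
      ((u ▷ H ≫ (α_ H H H).hom ≫ H ◁ (β_ H H).hom ≫ (α_ H H H).inv ≫ v ▷ H) ▷ M) ≫
        (α_ H H M).hom := by
  rw [tensorμ]
  simp only [comp_whiskerRight, Category.assoc]
  monoidal

/-- The key pure Hopf-algebra computation, stated with explicit structure maps. -/
theorem nu_key_aux {H : C} (η : 𝟙_ C ⟶ H) (μ : H ⊗ H ⟶ H) (ε : H ⟶ 𝟙_ C)
    (δ : H ⟶ H ⊗ H) (σ : H ⟶ H)
    (coassoc : δ ≫ (δ ▷ H) = δ ≫ (H ◁ δ) ≫ (α_ H H H).inv)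
    (counit_right : δ ≫ (H ◁ ε) = (ρ_ H).inv)
    (antipode_left : δ ≫ (σ ▷ H) ≫ μ = ε ≫ η)
    (sigma_comul : σ ≫ δ = δ ≫ (β_ H H).hom ≫ (σ ⊗ₘ σ)) :
    δ ≫ (σ ≫ δ) ▷ H ≫ (α_ H H H).hom ≫ H ◁ (β_ H H).hom ≫ (α_ H H H).inv ≫ μ ▷ H =
      σ ≫ (λ_ H).inv ≫ η ▷ H := by
  rw [sigma_comul]
  simp only [comp_whiskerRight, Category.assoc, MonoidalCategory.tensorHom_def]
  slice_lhs 5 6 => rw [associator_naturality_middle]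
  slice_lhs 6 7 => rw [← MonoidalCategory.whiskerLeft_comp, braiding_naturality_left,
    MonoidalCategory.whiskerLeft_comp]
  slice_lhs 4 5 => rw [associator_naturality_left]
  slice_lhs 5 6 => rw [← whisker_exchange]
  simp only [Category.assoc]
  slice_lhs 7 8 => rw [associator_inv_naturality_right]
  slice_lhs 6 7 => rw [associator_inv_naturality_left]
  slice_lhs 8 9 => rw [whisker_exchange]
  slice_lhs 7 8 => rw [← comp_whiskerRight]
  have hB : (β_ H H).hom ▷ H ≫ (α_ H H H).hom ≫ H ◁ (β_ H H).hom ≫ (α_ H H H).inv =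
      (α_ H H H).hom ≫ (β_ H (H ⊗ H)).hom := by
    rw [braiding_tensor_right_hom]; simp
  slice_lhs 3 6 => rw [hB]
  slice_lhs 4 5 => rw [← braiding_naturality_right]
  have hC : δ ≫ δ ▷ H ≫ (α_ H H H).hom = δ ≫ H ◁ δ := by
    rw [reassoc_of% coassoc]; simp
  slice_lhs 1 3 => rw [hC]
  slice_lhs 2 3 => rw [← MonoidalCategory.whiskerLeft_comp]
  rw [antipode_left]
  simp only [MonoidalCategory.whiskerLeft_comp, Category.assoc]
  rw [reassoc_of% counit_right, braiding_naturality_right_assoc, braiding_tensorUnit_right]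
  slice_lhs 4 5 => rw [← whisker_exchange]
  simp [← leftUnitor_inv_naturality]

/-- The key pure Hopf-algebra computation behind triviality of the coaction on
the image of `ν`. -/
theorem nu_key (A : HopfAlg C) :
    A.δ ≫ (A.σ ≫ A.δ) ▷ A.H ≫ (α_ A.H A.H A.H).hom ≫ A.H ◁ (β_ A.H A.H).hom ≫
        (α_ A.H A.H A.H).inv ≫ A.μ ▷ A.H =
      A.σ ≫ (λ_ A.H).inv ≫ A.η ▷ A.H :=
  nu_key_aux A.η A.μ A.ε A.δ A.σ A.coassoc A.counit_right A.antipode_left A.sigma_comul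

end HopfAlg

/-- φ ∘ ν = (η ⊗ 1) ∘ ν : the coaction of the image of ν is trivial. -/
theorem coact_comp_nu {C : Type u} [Category.{v} C] [MonoidalCategory C]
    [BraidedCategory C] (A : HopfAlg C) (N : HopfModule A) :
    (N.coact ≫ (A.σ ▷ N.M) ≫ N.act) ≫ N.coact =
      (N.coact ≫ (A.σ ▷ N.M) ≫ N.act) ≫ (λ_ N.M).inv ≫ (A.η ▷ N.M) := by
  obtain ⟨M, act, coact, -, -, coact_comul, -, compat⟩ := N
  dsimp only at *
  simp only [Category.assoc]
  rw [compat, tensorHom_def' A.δ coact]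
  slice_lhs 2 3 => rw [← whisker_exchange]
  have hcc : coact ≫ A.H ◁ coact = coact ≫ A.δ ▷ M ≫ (α_ A.H A.H M).hom := by
    rw [reassoc_of% coact_comul]; simp
  slice_lhs 1 2 => rw [hcc]
  slice_lhs 4 5 => rw [← comp_whiskerRight]
  rw [tensorHom_def A.μ act]
  slice_lhs 3 6 => rw [HopfAlg.aux_struct]
  simp only [Category.assoc]
  rw [← comp_whiskerRight_assoc, HopfAlg.nu_key]
  simp only [comp_whiskerRight, Category.assoc]
  slice_lhs 4 5 => rw [associator_naturality_left]
  slice_lhs 5 6 => rw [← whisker_exchange]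
  have hL : (λ_ A.H).inv ▷ M ≫ (α_ (𝟙_ C) A.H M).hom = (λ_ (A.H ⊗ M)).inv := by
    monoidal
  rw [reassoc_of% hL, ← leftUnitor_inv_naturality_assoc]
end

section
/- Let M be a left H-Hopf module with splitting ι: M^H → M, υ: M → M^H of the idempotent ν. Define ξ := α ∘ (1_H ⊗ ι) : H ⊗ M^H → M and ψ := (1_H ⊗ υ) ∘ φ : M → H ⊗ M^H. Then ξ ∘ ψ = 1_M. -/
open CategoryTheory MonoidalCategory BraidedCategory

universe v u

/-- With ξ = α ∘ (1 ⊗ ι) and ψ = (1 ⊗ υ) ∘ φ, one has ξ ∘ ψ = 1. -/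
theorem xi_comp_psi {C : Type u} [Category.{v} C] [MonoidalCategory C]
    [BraidedCategory C] (A : HopfAlg C) (N : HopfModule A)
    (MH : C) (ι : MH ⟶ N.M) (υ : N.M ⟶ MH)
    (h1 : ι ≫ υ = 𝟙 MH)
    (h2 : υ ≫ ι = N.coact ≫ (A.σ ▷ N.M) ≫ N.act) :
    (N.coact ≫ (A.H ◁ υ)) ≫ ((A.H ◁ ι) ≫ N.act) = 𝟙 N.M := by
  have step : (N.coact ≫ (A.H ◁ υ)) ≫ ((A.H ◁ ι) ≫ N.act)
      = N.coact ≫ (A.H ◁ (υ ≫ ι)) ≫ N.act := by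
    simp [MonoidalCategory.whiskerLeft_comp]
  rw [step, h2, MonoidalCategory.whiskerLeft_comp, MonoidalCategory.whiskerLeft_comp]
  have hact : (A.H ◁ N.act) ≫ N.act = (α_ A.H A.H N.M).inv ≫ (A.μ ▷ N.M) ≫ N.act := by
    rw [N.act_mul]; simp
  slice_lhs 4 5 => rw [hact]
  have hswap : (A.H ◁ (A.σ ▷ N.M)) ≫ (α_ A.H A.H N.M).inv
      = (α_ A.H A.H N.M).inv ≫ ((A.H ◁ A.σ) ▷ N.M) := by
    simp
  slice_lhs 3 4 => rw [hswap]
  slice_lhs 1 3 => rw [← N.coact_comul]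
  slice_lhs 2 4 => rw [← MonoidalCategory.comp_whiskerRight, ← MonoidalCategory.comp_whiskerRight,
    A.antipode_right]
  rw [MonoidalCategory.comp_whiskerRight]
  slice_lhs 1 2 => rw [N.coact_counit]
  slice_lhs 2 3 => rw [N.act_one]
  simp
end

section
/- Fundamental theorem of Hopf modules: if M is a left H-Hopf module in a braided monoidal category and the idempotent ν = α ∘ (σ ⊗ 1_M) ∘ φ splits through an object M^H, then there is an isomorphism H ⊗ M^H ≅ M which is a morphism of left H-Hopf modules, where H ⊗ M^H carries the free Hopf module structure with action μ ⊗ 1 and coaction δ ⊗ 1. -/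
open CategoryTheory MonoidalCategory BraidedCategory

universe v u

namespace FT
variable {C : Type u} [Category.{v} C] [MonoidalCategory C] [BraidedCategory C]
variable (A : HopfAlg C)

def toMon : MonObj A.H where
  one := A.η
  mul := A.μ
  one_mul := A.one_mul
  mul_one := A.mul_one
  mul_assoc := A.mul_assoc

def m2 : (A.H ⊗ A.H) ⊗ (A.H ⊗ A.H) ⟶ A.H ⊗ A.H := tensorμ A.H A.H A.H A.H ≫ (A.μ ⊗ₘ A.μ)
def u2 : 𝟙_ C ⟶ A.H ⊗ A.H := (λ_ (𝟙_ C)).inv ≫ (A.η ⊗ₘ A.η)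
def conv (f g : A.H ⟶ A.H ⊗ A.H) : A.H ⟶ A.H ⊗ A.H := A.δ ≫ (f ⊗ₘ g) ≫ m2 A

lemma m2_assoc : (m2 A ▷ (A.H ⊗ A.H)) ≫ m2 A =
    (α_ (A.H ⊗ A.H) (A.H ⊗ A.H) (A.H ⊗ A.H)).hom ≫ ((A.H ⊗ A.H) ◁ m2 A) ≫ m2 A := by
  have := @MonObj.Mon_tensor_mul_assoc _ _ _ _ A.H A.H (toMon A) (toMon A)
  exact this

lemma m2_one : (u2 A ▷ (A.H ⊗ A.H)) ≫ m2 A = (λ_ (A.H ⊗ A.H)).hom := by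
  have := @MonObj.Mon_tensor_one_mul _ _ _ _ A.H A.H (toMon A) (toMon A)
  exact this

lemma conv_unit_left (f : A.H ⟶ A.H ⊗ A.H) : conv A (A.ε ≫ u2 A) f = f := by
  rw [conv]
  have h : ((A.ε ≫ u2 A) ⊗ₘ f) = (A.ε ▷ A.H) ≫ (𝟙_ C ◁ f) ≫ (u2 A ▷ (A.H ⊗ A.H)) := by
    conv_lhs => rw [show f = 𝟙 A.H ≫ f by simp]
    rw [← tensorHom_comp_tensorHom, tensorHom_id, MonoidalCategory.tensorHom_def']
  rw [h]
  slice_lhs 1 2 => rw [A.counit_left]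
  slice_lhs 3 4 => rw [m2_one]
  simp

lemma conv_assoc (f g h : A.H ⟶ A.H ⊗ A.H) :
    conv A (conv A f g) h = conv A f (conv A g h) := by
  rw [conv, conv, conv, conv]
  have e1 : ((A.δ ≫ (f ⊗ₘ g) ≫ m2 A) ⊗ₘ h) =
      (A.δ ▷ A.H) ≫ ((f ⊗ₘ g) ⊗ₘ h) ≫ (m2 A ▷ (A.H ⊗ A.H)) := by
    conv_lhs => rw [show h = 𝟙 A.H ≫ h ≫ 𝟙 (A.H ⊗ A.H) by simp]
    rw [← tensorHom_comp_tensorHom, ← tensorHom_comp_tensorHom, tensorHom_id, tensorHom_id]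
  have e2 : (f ⊗ₘ (A.δ ≫ (g ⊗ₘ h) ≫ m2 A)) =
      (A.H ◁ A.δ) ≫ (f ⊗ₘ (g ⊗ₘ h)) ≫ ((A.H ⊗ A.H) ◁ m2 A) := by
    conv_lhs => rw [show f = 𝟙 A.H ≫ f ≫ 𝟙 (A.H ⊗ A.H) by simp]
    rw [← tensorHom_comp_tensorHom, ← tensorHom_comp_tensorHom, id_tensorHom, id_tensorHom]
  rw [e1, e2]
  slice_lhs 4 5 => rw [m2_assoc]
  slice_lhs 3 4 => rw [associator_naturality]
  slice_lhs 1 2 => rw [A.coassoc]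
  simp

def ds : A.H ⟶ A.H ⊗ A.H := A.σ ≫ A.δ
def jj : A.H ⟶ A.H ⊗ A.H := (ρ_ A.H).inv ≫ (A.H ◁ A.η)
def ss : A.H ⟶ A.H ⊗ A.H := A.σ ≫ (λ_ A.H).inv ≫ (A.η ▷ A.H)
def uu : A.H ⟶ A.H ⊗ A.H := A.ε ≫ u2 A
def TT : A.H ⟶ A.H ⊗ A.H :=
  A.δ ≫ (ds A ▷ A.H) ≫ (α_ A.H A.H A.H).hom ≫ (A.H ◁ (β_ A.H A.H).hom) ≫
    (α_ A.H A.H A.H).inv ≫ (A.μ ▷ A.H)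

lemma L1 : conv A (ds A) A.δ = uu A := by
  rw [conv, ds, m2, uu, u2]
  have h : ((A.σ ≫ A.δ) ⊗ₘ A.δ) = (A.σ ▷ A.H) ≫ (A.δ ⊗ₘ A.δ) := by
    conv_lhs => rw [show A.δ = 𝟙 A.H ≫ A.δ from by simp]
    rw [← tensorHom_comp_tensorHom]
    simp
  rw [h]
  slice_lhs 3 5 => rw [← A.mul_comul]
  slice_lhs 1 3 => rw [A.antipode_left]
  rw [Category.assoc, A.one_comul]

lemma L3 : conv A (ds A) (jj A) = TT A := by
  rw [conv, jj, m2, TT]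
  have h : (ds A ⊗ₘ ((ρ_ A.H).inv ≫ (A.H ◁ A.η))) =
      (ds A ▷ A.H) ≫ ((A.H ⊗ A.H) ◁ (ρ_ A.H).inv) ≫ ((A.H ⊗ A.H) ◁ (A.H ◁ A.η)) := by
    rw [MonoidalCategory.tensorHom_def, MonoidalCategory.whiskerLeft_comp]
  rw [h]
  have nat : ((A.H ⊗ A.H) ◁ (A.H ◁ A.η)) ≫ tensorμ A.H A.H A.H A.H =
      tensorμ A.H A.H A.H (𝟙_ C) ≫ ((A.H ⊗ A.H) ◁ (A.H ◁ A.η)) := by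
    have := tensorμ_natural_right (C := C) A.H A.H (𝟙 A.H) A.η
    simpa using this
  slice_lhs 4 5 => rw [nat]
  have h2 : ((A.H ⊗ A.H) ◁ (A.H ◁ A.η)) ≫ (A.μ ⊗ₘ A.μ) = (A.μ ⊗ₘ (ρ_ A.H).hom) :=
    calc ((A.H ⊗ A.H) ◁ (A.H ◁ A.η)) ≫ (A.μ ⊗ₘ A.μ)
        = (𝟙 (A.H ⊗ A.H) ⊗ₘ (A.H ◁ A.η)) ≫ (A.μ ⊗ₘ A.μ) := by rw [id_tensorHom]
      _ = (𝟙 (A.H ⊗ A.H) ≫ A.μ) ⊗ₘ ((A.H ◁ A.η) ≫ A.μ) := by rw [tensorHom_comp_tensorHom]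
      _ = (A.μ ⊗ₘ (ρ_ A.H).hom) := by rw [A.mul_one, Category.id_comp]
  slice_lhs 5 6 => rw [h2]
  have h3 : ((A.H ⊗ A.H) ◁ (ρ_ A.H).inv) ≫ tensorμ A.H A.H A.H (𝟙_ C) ≫ (A.μ ⊗ₘ (ρ_ A.H).hom) =
      (α_ A.H A.H A.H).hom ≫ (A.H ◁ (β_ A.H A.H).hom) ≫ (α_ A.H A.H A.H).inv ≫ (A.μ ▷ A.H) := by
    rw [tensorμ, MonoidalCategory.tensorHom_def]
    monoidal
  slice_lhs 3 5 => rw [h3]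

lemma L4 : conv A A.δ (ss A) = jj A := by
  rw [conv, ss, m2, jj]
  have h : (A.δ ⊗ₘ (A.σ ≫ (λ_ A.H).inv ≫ (A.η ▷ A.H))) =
      (A.δ ▷ A.H) ≫ ((A.H ⊗ A.H) ◁ A.σ) ≫ ((A.H ⊗ A.H) ◁ (λ_ A.H).inv) ≫
        ((A.H ⊗ A.H) ◁ (A.η ▷ A.H)) := by
    rw [MonoidalCategory.tensorHom_def, MonoidalCategory.whiskerLeft_comp, MonoidalCategory.whiskerLeft_comp]
  rw [h]
  have nat : ((A.H ⊗ A.H) ◁ (A.η ▷ A.H)) ≫ tensorμ A.H A.H A.H A.H =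
      tensorμ A.H A.H (𝟙_ C) A.H ≫ ((A.H ◁ A.η) ▷ (A.H ⊗ A.H)) := by
    have := tensorμ_natural_right (C := C) A.H A.H A.η (𝟙 A.H)
    simpa using this
  slice_lhs 5 6 => rw [nat]
  have h2 : ((A.H ◁ A.η) ▷ (A.H ⊗ A.H)) ≫ (A.μ ⊗ₘ A.μ) = ((ρ_ A.H).hom ⊗ₘ A.μ) :=
    calc ((A.H ◁ A.η) ▷ (A.H ⊗ A.H)) ≫ (A.μ ⊗ₘ A.μ)
        = ((A.H ◁ A.η) ⊗ₘ 𝟙 (A.H ⊗ A.H)) ≫ (A.μ ⊗ₘ A.μ) := by rw [tensorHom_id]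
      _ = ((A.H ◁ A.η) ≫ A.μ) ⊗ₘ (𝟙 (A.H ⊗ A.H) ≫ A.μ) := by rw [tensorHom_comp_tensorHom]
      _ = ((ρ_ A.H).hom ⊗ₘ A.μ) := by rw [A.mul_one, Category.id_comp]
  slice_lhs 6 7 => rw [h2]
  have h3 : tensorμ A.H A.H (𝟙_ C) A.H ≫ ((ρ_ A.H).hom ⊗ₘ A.μ) =
      ((A.H ⊗ A.H) ◁ (λ_ A.H).hom) ≫ (α_ A.H A.H A.H).hom ≫ (A.H ◁ A.μ) := by
    rw [tensorμ, braiding_tensorUnit_right, MonoidalCategory.tensorHom_def]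
    monoidal
  slice_lhs 5 6 => rw [h3]
  have h4 : ((A.H ⊗ A.H) ◁ (λ_ A.H).inv) ≫ ((A.H ⊗ A.H) ◁ (λ_ A.H).hom) = 𝟙 _ := by
    rw [← MonoidalCategory.whiskerLeft_comp]; simp
  slice_lhs 4 5 => rw [h4]
  rw [Category.id_comp]
  slice_lhs 1 2 => rw [A.coassoc]
  have h5 : (α_ A.H A.H A.H).inv ≫ ((A.H ⊗ A.H) ◁ A.σ) ≫ (α_ A.H A.H A.H).hom =
      A.H ◁ (A.H ◁ A.σ) := by simp
  slice_lhs 3 5 => rw [h5]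
  have h6 : A.δ ≫ (A.H ◁ A.δ) ≫ (A.H ◁ (A.H ◁ A.σ)) ≫ (A.H ◁ A.μ) =
      A.δ ≫ (A.H ◁ (A.δ ≫ (A.H ◁ A.σ) ≫ A.μ)) := by
    simp [MonoidalCategory.whiskerLeft_comp]
  rw [h6, A.antipode_right, MonoidalCategory.whiskerLeft_comp]
  slice_lhs 1 2 => rw [A.counit_right]

lemma A2 : TT A = ss A := by
  conv_lhs => rw [← L3]
  rw [← L4 A, ← conv_assoc, L1]
  have h : uu A = A.ε ≫ u2 A := rfl
  rw [h, conv_unit_left]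


variable (N : HopfModule A)

lemma coact_comul' : N.coact ≫ (A.H ◁ N.coact) = N.coact ≫ (A.δ ▷ N.M) ≫ (α_ A.H A.H N.M).hom := by
  simp only [← Category.assoc]
  rw [N.coact_comul]; simp

lemma act_mul' : (A.H ◁ N.act) ≫ N.act = (α_ A.H A.H N.M).inv ≫ (A.μ ▷ N.M) ≫ N.act := by
  rw [N.act_mul]; simp

lemma lemB : N.coact ≫ (A.H ◁ (N.coact ≫ (A.σ ▷ N.M) ≫ N.act)) ≫ N.act = 𝟙 N.M := by
  rw [MonoidalCategory.whiskerLeft_comp, MonoidalCategory.whiskerLeft_comp]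
  slice_lhs 1 2 => rw [coact_comul']
  slice_lhs 5 6 => rw [act_mul']
  have hm : (α_ A.H A.H N.M).hom ≫ (A.H ◁ (A.σ ▷ N.M)) ≫ (α_ A.H A.H N.M).inv =
      ((A.H ◁ A.σ) ▷ N.M) := by simp
  slice_lhs 3 5 => rw [hm]
  have hk : (A.δ ▷ N.M) ≫ ((A.H ◁ A.σ) ▷ N.M) ≫ (A.μ ▷ N.M) = ((A.ε ≫ A.η) ▷ N.M) := by
    rw [← comp_whiskerRight, ← comp_whiskerRight]
    congr 1
    exact A.antipode_right
  slice_lhs 2 4 => rw [hk]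
  rw [comp_whiskerRight]
  slice_lhs 1 2 => rw [N.coact_counit]
  slice_lhs 2 3 => rw [N.act_one]
  simp

lemma lemA : (N.coact ≫ (A.σ ▷ N.M) ≫ N.act) ≫ N.coact =
    (N.coact ≫ (A.σ ▷ N.M) ≫ N.act) ≫ (λ_ N.M).inv ≫ (A.η ▷ N.M) := by
  have step0 : (N.coact ≫ (A.σ ▷ N.M) ≫ N.act) ≫ N.coact
      = N.coact ≫ (A.σ ▷ N.M) ≫ (A.δ ⊗ₘ N.coact) ≫ tensorμ A.H A.H A.H N.M ≫ (A.μ ⊗ₘ N.act) := by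
    simp only [Category.assoc, N.compat]
  rw [step0]
  have h1 : (A.σ ▷ N.M) ≫ (A.δ ⊗ₘ N.coact) =
      (A.H ◁ N.coact) ≫ ((A.σ ≫ A.δ) ▷ (A.H ⊗ N.M)) := by
    rw [MonoidalCategory.tensorHom_def', comp_whiskerRight, ← Category.assoc, ← whisker_exchange, Category.assoc]
  slice_lhs 2 3 => rw [h1]
  slice_lhs 1 2 => rw [coact_comul']
  have h2 : (α_ A.H A.H N.M).hom ≫ ((A.σ ≫ A.δ) ▷ (A.H ⊗ N.M)) =
      (((A.σ ≫ A.δ) ▷ A.H) ▷ N.M) ≫ (α_ (A.H ⊗ A.H) A.H N.M).hom := by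
    rw [associator_naturality_left]
  slice_lhs 3 4 => rw [h2]
  have hS1 : (α_ (A.H ⊗ A.H) A.H N.M).hom ≫ tensorμ A.H A.H A.H N.M ≫ (A.μ ⊗ₘ N.act) =
      (((α_ A.H A.H A.H).hom ≫ (A.H ◁ (β_ A.H A.H).hom) ≫ (α_ A.H A.H A.H).inv ≫
        (A.μ ▷ A.H)) ▷ N.M) ≫ (α_ A.H A.H N.M).hom ≫ (A.H ◁ N.act) := by
    rw [tensorμ, MonoidalCategory.tensorHom_def]
    monoidal
  slice_lhs 4 6 => rw [hS1]
  have hT : (A.δ ▷ N.M) ≫ (((A.σ ≫ A.δ) ▷ A.H) ▷ N.M) ≫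
      (((α_ A.H A.H A.H).hom ≫ (A.H ◁ (β_ A.H A.H).hom) ≫ (α_ A.H A.H A.H).inv ≫
        (A.μ ▷ A.H)) ▷ N.M) = (ss A) ▷ N.M := by
    rw [← A2, TT, ds]
    simp only [comp_whiskerRight, Category.assoc]
  rw [reassoc_of% hT]
  have hS3 : ((ss A) ▷ N.M) ≫ (α_ A.H A.H N.M).hom ≫ (A.H ◁ N.act) =
      (A.σ ▷ N.M) ≫ N.act ≫ (λ_ N.M).inv ≫ (A.η ▷ N.M) := by
    rw [ss]
    simp only [comp_whiskerRight, Category.assoc]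
    have e1 : ((A.η ▷ A.H) ▷ N.M) ≫ (α_ A.H A.H N.M).hom =
        (α_ (𝟙_ C) A.H N.M).hom ≫ (A.η ▷ (A.H ⊗ N.M)) := by
      rw [associator_naturality_left]
    slice_lhs 3 4 => rw [e1]
    have e2 : (A.η ▷ (A.H ⊗ N.M)) ≫ (A.H ◁ N.act) =
        (𝟙_ C ◁ N.act) ≫ (A.η ▷ N.M) := by
      rw [← whisker_exchange]
    slice_lhs 4 5 => rw [e2]
    have e3 : ((λ_ A.H).inv ▷ N.M) ≫ (α_ (𝟙_ C) A.H N.M).hom = (λ_ (A.H ⊗ N.M)).inv := by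
      monoidal
    slice_lhs 2 3 => rw [e3]
    have e4 : (λ_ (A.H ⊗ N.M)).inv ≫ (𝟙_ C ◁ N.act) = N.act ≫ (λ_ N.M).inv := by
      rw [← leftUnitor_inv_naturality]
    slice_lhs 2 3 => rw [e4]
    simp
  rw [hS3]
  simp


lemma coinv {MH : C} (ι : MH ⟶ N.M) (υ : N.M ⟶ MH)
    (h1 : ι ≫ υ = 𝟙 MH)
    (h2 : υ ≫ ι = N.coact ≫ (A.σ ▷ N.M) ≫ N.act) :
    ι ≫ N.coact = (λ_ MH).inv ≫ (A.η ▷ MH) ≫ (A.H ◁ ι) := by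
  have step : ι ≫ N.coact = ι ≫ ((N.coact ≫ (A.σ ▷ N.M) ≫ N.act) ≫ N.coact) := by
    conv_rhs => rw [← h2]
    slice_rhs 1 2 => rw [h1]
    simp
  rw [step, lemA, ← h2]
  slice_lhs 1 2 => rw [h1]
  rw [Category.id_comp]
  simp only [Category.assoc]
  rw [leftUnitor_inv_naturality_assoc]
  congr 1
  rw [whisker_exchange]

lemma key {MH : C} (ι : MH ⟶ N.M)
    (hcoinv : ι ≫ N.coact = (λ_ MH).inv ≫ (A.η ▷ MH) ≫ (A.H ◁ ι)) :
    ((A.H ◁ ι) ≫ N.act) ≫ N.coact =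
      (A.δ ▷ MH) ≫ (α_ A.H A.H MH).hom ≫ (A.H ◁ ((A.H ◁ ι) ≫ N.act)) := by
  rw [Category.assoc, N.compat]
  have p1 : (A.H ◁ ι) ≫ (A.δ ⊗ₘ N.coact) = (A.δ ▷ MH) ≫ ((A.H ⊗ A.H) ◁ (ι ≫ N.coact)) := by
    rw [MonoidalCategory.tensorHom_def, ← Category.assoc, whisker_exchange, Category.assoc,
      ← MonoidalCategory.whiskerLeft_comp]
  rw [← Category.assoc, p1, hcoinv]
  have hsplit : (λ_ MH).inv ≫ (A.η ▷ MH) ≫ (A.H ◁ ι) = (λ_ MH).inv ≫ (A.η ⊗ₘ ι) := by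
    rw [MonoidalCategory.tensorHom_def]
  rw [hsplit, MonoidalCategory.whiskerLeft_comp]
  have p2 : ((A.H ⊗ A.H) ◁ (A.η ⊗ₘ ι)) ≫ tensorμ A.H A.H A.H N.M =
      tensorμ A.H A.H (𝟙_ C) MH ≫ ((A.H ◁ A.η) ⊗ₘ (A.H ◁ ι)) :=
    tensorμ_natural_right A.H A.H A.η ι
  slice_lhs 3 4 => rw [p2]
  have p3 : ((A.H ◁ A.η) ⊗ₘ (A.H ◁ ι)) ≫ (A.μ ⊗ₘ N.act) =
      ((ρ_ A.H).hom ⊗ₘ ((A.H ◁ ι) ≫ N.act)) := by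
    rw [tensorHom_comp_tensorHom, A.mul_one]
  slice_lhs 4 5 => rw [p3]
  have p4 : ((ρ_ A.H).hom ⊗ₘ ((A.H ◁ ι) ≫ N.act)) =
      ((ρ_ A.H).hom ▷ (A.H ⊗ MH)) ≫ (A.H ◁ ((A.H ◁ ι) ≫ N.act)) := by
    rw [MonoidalCategory.tensorHom_def]
  rw [p4]
  have pS2 : ((A.H ⊗ A.H) ◁ (λ_ MH).inv) ≫ tensorμ A.H A.H (𝟙_ C) MH ≫
      ((ρ_ A.H).hom ▷ (A.H ⊗ MH)) = (α_ A.H A.H MH).hom := by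
    rw [tensorμ, braiding_tensorUnit_right]
    monoidal
  slice_lhs 2 4 => rw [pS2]

theorem fundamental_theorem_hopf_modules' {MH : C} (ι : MH ⟶ N.M) (υ : N.M ⟶ MH)
    (h1 : ι ≫ υ = 𝟙 MH)
    (h2 : υ ≫ ι = N.coact ≫ (A.σ ▷ N.M) ≫ N.act) :
    ∃ e : A.H ⊗ MH ≅ N.M,
      ((A.H ◁ e.hom) ≫ N.act =
        (α_ A.H A.H MH).inv ≫ (A.μ ▷ MH) ≫ e.hom) ∧
      (e.hom ≫ N.coact =
        (A.δ ▷ MH) ≫ (α_ A.H A.H MH).hom ≫ (A.H ◁ e.hom)) := by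
  have hcoinv := coinv A N ι υ h1 h2
  have hkey := key A N ι hcoinv
  have hC : ((A.H ◁ ι) ≫ N.act) ≫ υ = (A.ε ▷ MH) ≫ (λ_ MH).hom := by
    have hυ : υ = (υ ≫ ι) ≫ υ := by rw [Category.assoc, h1, Category.comp_id]
    conv_lhs => rw [hυ]
    rw [h2]
    -- ((H◁ι)≫act) ≫ ((coact ≫ σ▷M ≫ act) ≫ υ)
    have r1 : ((A.H ◁ ι) ≫ N.act) ≫ ((N.coact ≫ (A.σ ▷ N.M) ≫ N.act) ≫ υ) =
        ((((A.H ◁ ι) ≫ N.act) ≫ N.coact) ≫ (A.σ ▷ N.M) ≫ N.act) ≫ υ := by simp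
    rw [r1, hkey]
    -- ((δ▷MH ≫ α.hom ≫ H◁e) ≫ σ▷M ≫ act) ≫ υ
    have r2 : (A.H ◁ ((A.H ◁ ι) ≫ N.act)) ≫ (A.σ ▷ N.M) =
        (A.σ ▷ (A.H ⊗ MH)) ≫ (A.H ◁ ((A.H ◁ ι) ≫ N.act)) := by
      rw [whisker_exchange]
    have r3 : (α_ A.H A.H MH).hom ≫ (A.σ ▷ (A.H ⊗ MH)) =
        ((A.σ ▷ A.H) ▷ MH) ≫ (α_ A.H A.H MH).hom := by rw [associator_naturality_left]
    have r4 : (A.H ◁ ((A.H ◁ ι) ≫ N.act)) ≫ N.act =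
        (α_ A.H A.H MH).inv ≫ (A.μ ▷ MH) ≫ (A.H ◁ ι) ≫ N.act := by
      rw [MonoidalCategory.whiskerLeft_comp]
      slice_lhs 2 3 => rw [act_mul']
      slice_lhs 1 2 => rw [associator_inv_naturality_right]
      slice_lhs 2 3 => rw [whisker_exchange]
      simp
    calc ((A.δ ▷ MH ≫ (α_ A.H A.H MH).hom ≫ A.H ◁ ((A.H ◁ ι) ≫ N.act)) ≫
            (A.σ ▷ N.M) ≫ N.act) ≫ υ
        = (A.δ ▷ MH) ≫ ((A.σ ▷ A.H) ▷ MH) ≫ (α_ A.H A.H MH).hom ≫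
            ((A.H ◁ ((A.H ◁ ι) ≫ N.act)) ≫ N.act) ≫ υ := by
          simp only [Category.assoc]
          slice_lhs 3 4 => rw [r2]
          slice_lhs 2 3 => rw [r3]
          simp
      _ = (A.δ ▷ MH) ≫ ((A.σ ▷ A.H) ▷ MH) ≫ (A.μ ▷ MH) ≫ ((A.H ◁ ι) ≫ N.act) ≫ υ := by
          rw [r4]; simp
      _ = ((A.δ ≫ (A.σ ▷ A.H) ≫ A.μ) ▷ MH) ≫ ((A.H ◁ ι) ≫ N.act) ≫ υ := by
          simp [comp_whiskerRight]
      _ = ((A.ε ≫ A.η) ▷ MH) ≫ ((A.H ◁ ι) ≫ N.act) ≫ υ := by rw [A.antipode_left]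
      _ = (A.ε ▷ MH) ≫ (A.η ▷ MH) ≫ (A.H ◁ ι) ≫ N.act ≫ υ := by
          rw [comp_whiskerRight]; simp
      _ = (A.ε ▷ MH) ≫ (𝟙_ C ◁ ι) ≫ (A.η ▷ N.M) ≫ N.act ≫ υ := by
          rw [← whisker_exchange_assoc]
      _ = (A.ε ▷ MH) ≫ (𝟙_ C ◁ ι) ≫ (λ_ N.M).hom ≫ υ := by
          slice_lhs 3 4 => rw [N.act_one]
      _ = (A.ε ▷ MH) ≫ (λ_ MH).hom ≫ ι ≫ υ := by rw [leftUnitor_naturality_assoc]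
      _ = (A.ε ▷ MH) ≫ (λ_ MH).hom := by rw [h1]; simp
  have inv1 : ((A.H ◁ ι) ≫ N.act) ≫ (N.coact ≫ (A.H ◁ υ)) = 𝟙 (A.H ⊗ MH) := by
    rw [show ((A.H ◁ ι) ≫ N.act) ≫ (N.coact ≫ (A.H ◁ υ)) =
        (((A.H ◁ ι) ≫ N.act) ≫ N.coact) ≫ (A.H ◁ υ) from by simp]
    rw [hkey]
    have q1 : (A.H ◁ ((A.H ◁ ι) ≫ N.act)) ≫ (A.H ◁ υ) =
        A.H ◁ ((A.ε ▷ MH) ≫ (λ_ MH).hom) := by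
      rw [← MonoidalCategory.whiskerLeft_comp, Category.assoc, ← hC]
      simp
    slice_lhs 3 4 => rw [q1]
    rw [MonoidalCategory.whiskerLeft_comp]
    have q2 : (α_ A.H A.H MH).hom ≫ (A.H ◁ (A.ε ▷ MH)) =
        ((A.H ◁ A.ε) ▷ MH) ≫ (α_ A.H (𝟙_ C) MH).hom := by
      rw [associator_naturality_middle]
    slice_lhs 2 3 => rw [q2]
    have q3 : (A.δ ▷ MH) ≫ ((A.H ◁ A.ε) ▷ MH) = (ρ_ A.H).inv ▷ MH := by
      rw [← comp_whiskerRight, A.counit_right]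
    slice_lhs 1 2 => rw [q3]
    monoidal
  have inv2 : (N.coact ≫ (A.H ◁ υ)) ≫ ((A.H ◁ ι) ≫ N.act) = 𝟙 N.M := by
    have q : (A.H ◁ υ) ≫ (A.H ◁ ι) = A.H ◁ (N.coact ≫ (A.σ ▷ N.M) ≫ N.act) := by
      rw [← MonoidalCategory.whiskerLeft_comp, h2]
    calc (N.coact ≫ (A.H ◁ υ)) ≫ ((A.H ◁ ι) ≫ N.act)
        = N.coact ≫ ((A.H ◁ υ) ≫ (A.H ◁ ι)) ≫ N.act := by simp
      _ = N.coact ≫ (A.H ◁ (N.coact ≫ (A.σ ▷ N.M) ≫ N.act)) ≫ N.act := by rw [q]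
      _ = 𝟙 N.M := lemB A N
  have conj1 : (A.H ◁ ((A.H ◁ ι) ≫ N.act)) ≫ N.act =
      (α_ A.H A.H MH).inv ≫ (A.μ ▷ MH) ≫ ((A.H ◁ ι) ≫ N.act) := by
    rw [MonoidalCategory.whiskerLeft_comp]
    slice_lhs 2 3 => rw [act_mul']
    slice_lhs 1 2 => rw [associator_inv_naturality_right]
    slice_lhs 2 3 => rw [whisker_exchange]
    simp
  exact ⟨{ hom := (A.H ◁ ι) ≫ N.act, inv := N.coact ≫ (A.H ◁ υ),
           hom_inv_id := inv1, inv_hom_id := inv2 }, conj1, hkey⟩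

end FT


/-- Fundamental theorem of Hopf modules: if the idempotent ν splits through
M^H, then H ⊗ M^H ≅ M as left H-Hopf modules (H ⊗ M^H carrying the free
structure with action μ ⊗ 1 and coaction δ ⊗ 1). -/
theorem fundamental_theorem_hopf_modules {C : Type u} [Category.{v} C]
    [MonoidalCategory C] [BraidedCategory C] (A : HopfAlg C) (N : HopfModule A)
    (MH : C) (ι : MH ⟶ N.M) (υ : N.M ⟶ MH)
    (h1 : ι ≫ υ = 𝟙 MH)
    (h2 : υ ≫ ι = N.coact ≫ (A.σ ▷ N.M) ≫ N.act) :
    ∃ e : A.H ⊗ MH ≅ N.M,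
      ((A.H ◁ e.hom) ≫ N.act =
        (α_ A.H A.H MH).inv ≫ (A.μ ▷ MH) ≫ e.hom) ∧
      (e.hom ≫ N.coact =
        (A.δ ▷ MH) ≫ (α_ A.H A.H MH).hom ≫ (A.H ◁ e.hom)) :=
  FT.fundamental_theorem_hopf_modules' A N ι υ h1 h2
end

section
/- The map ξ := α ∘ (1_H ⊗ ι) : H ⊗ M^H → M is a morphism of left H-comodules, i.e., φ ∘ ξ = (1_H ⊗ ξ) ∘ (δ ⊗ 1_{M^H}), where the coaction on H ⊗ M^H is δ ⊗ 1_{M^H}. -/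
open CategoryTheory MonoidalCategory BraidedCategory

universe v u

/-- If φ ∘ ι = (η ⊗ 1) ∘ ι, then ξ = α ∘ (1 ⊗ ι) is a morphism of left
H-comodules from H ⊗ M^H (with coaction δ ⊗ 1) to M. -/
theorem xi_comodule_map {C : Type u} [Category.{v} C] [MonoidalCategory C]
    [BraidedCategory C] (A : HopfAlg C) (N : HopfModule A)
    (MH : C) (ι : MH ⟶ N.M)
    (hι : ι ≫ N.coact = ι ≫ (λ_ N.M).inv ≫ (A.η ▷ N.M)) :
    ((A.H ◁ ι) ≫ N.act) ≫ N.coact =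
      (A.δ ▷ MH) ≫ (α_ A.H A.H MH).hom ≫ (A.H ◁ ((A.H ◁ ι) ≫ N.act)) := by
  rw [Category.assoc, N.compat]
  slice_lhs 1 2 => rw [MonoidalCategory.tensorHom_def]; rw [← Category.assoc, whisker_exchange, Category.assoc, ← MonoidalCategory.whiskerLeft_comp, hι]
  simp [tensorμ, MonoidalCategory.tensorHom_def]
  congr 3
  have hc : A.H ◁ (λ_ N.M).inv ≫ A.H ◁ A.η ▷ N.M ≫ (α_ A.H A.H N.M).inv ≫
      (β_ A.H A.H).hom ▷ N.M =
      (λ_ A.H).inv ▷ N.M ≫ (A.η ▷ A.H) ▷ N.M := by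
    rw [associator_inv_naturality_middle_assoc, ← comp_whiskerRight,
      BraidedCategory.braiding_naturality_right, braiding_tensorUnit_right]
    monoidal
  slice_lhs 1 4 =>
    rw [← MonoidalCategory.whiskerLeft_comp, ← MonoidalCategory.whiskerLeft_comp,
      ← MonoidalCategory.whiskerLeft_comp, hc]
  rw [MonoidalCategory.whiskerLeft_comp]
  have hd : A.H ◁ (A.η ▷ A.H) ▷ N.M ≫ (α_ A.H (A.H ⊗ A.H) N.M).inv ≫
      (α_ A.H A.H A.H).inv ▷ N.M ≫ A.μ ▷ A.H ▷ N.M =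
      (α_ A.H (𝟙_ C ⊗ A.H) N.M).inv ≫
        ((α_ A.H (𝟙_ C) A.H).inv ≫ (ρ_ A.H).hom ▷ A.H) ▷ N.M := by
    rw [associator_inv_naturality_middle_assoc, ← comp_whiskerRight_assoc,
      ← comp_whiskerRight, Category.assoc, associator_inv_naturality_middle_assoc,
      ← comp_whiskerRight, A.mul_one]
  slice_lhs 2 5 => rw [hd]
  monoidal
end
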